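/- Let F := X·(1 + X/2)⁻² ∈ X + X²ℂ[[X]], let h ∈ X + X²ℂ[[X]] be the compositional inverse of F (F∘h = X and h∘F = X), and let s ∈ ℂ[[X]] be the unique power series with coeff_0 s = 1 and s² = 1 − 2X. Then h = X·s·h', i.e. 𝔗h = h/h' = X·√(1 − 2X). (This is the boxed identity φ₄(x) = 2·ln(1 + x/2): the series φ₄ satisfies 𝔗Q(X·e^{−φ₄(X)}) = X·e^{(1/4)φ₄(−4X)}, giving the solution of 𝔗f = f(pX)/p for p⁴ = −4.) -/

import Mathlib

open PowerSeries Finset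

/-- Composition `f ∘ g` of formal power series (intended for `g` with zero constant
term). -/
noncomputable def pcomp (f g : PowerSeries ℂ) : PowerSeries ℂ :=
  PowerSeries.mk fun n => ∑ k ∈ range (n + 1), coeff (R := ℂ) k f * coeff (R := ℂ) n (g ^ k)

/-- The series `F = X·(1 + X/2)⁻² = X·e^{−φ₄(X)}` where `φ₄(x) = 2·ln(1+x/2)`. -/
noncomputable def F₄ : PowerSeries ℂ := X * ((1 + C (R := ℂ) (1 / 2) * X)⁻¹) ^ 2

/-- If `g` has zero constant term, low coefficients of its powers vanish. -/
lemma aux_coeff_pow_zero {g : PowerSeries ℂ} (hg : coeff (R := ℂ) 0 g = 0) {n k : ℕ}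
    (hnk : n < k) : coeff (R := ℂ) n (g ^ k) = 0 := by
  have hX : (X : PowerSeries ℂ) ∣ g := X_dvd_iff.mpr (by simpa using hg)
  exact X_pow_dvd_iff.mp (pow_dvd_pow_of_dvd hX k) n hnk

lemma pcomp_add (f₁ f₂ g : PowerSeries ℂ) :
    pcomp (f₁ + f₂) g = pcomp f₁ g + pcomp f₂ g := by
  ext n
  simp [pcomp, add_mul, Finset.sum_add_distrib]

lemma pcomp_C_mul (a : ℂ) (f g : PowerSeries ℂ) :
    pcomp (C (R := ℂ) a * f) g = C (R := ℂ) a * pcomp f g := by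
  ext n
  simp [pcomp, Finset.mul_sum, mul_assoc]

lemma pcomp_X_mul {g : PowerSeries ℂ} (hg : coeff (R := ℂ) 0 g = 0) (f : PowerSeries ℂ) :
    pcomp (X * f) g = g * pcomp f g := by
  ext n
  rw [pcomp, coeff_mk, coeff_mul]
  have lhs_eq : ∑ k ∈ range (n + 1), coeff (R := ℂ) k (X * f) * coeff (R := ℂ) n (g ^ k)
      = ∑ j ∈ range (n + 1), coeff (R := ℂ) j f * coeff (R := ℂ) n (g ^ (j + 1)) := by
    rw [Finset.sum_range_succ' (fun k => coeff (R := ℂ) k (X * f) * coeff (R := ℂ) n (g ^ k)) n,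
      Finset.sum_range_succ (fun j => coeff (R := ℂ) j f * coeff (R := ℂ) n (g ^ (j + 1))) n]
    simp only [coeff_succ_X_mul]
    rw [aux_coeff_pow_zero hg (Nat.lt_succ_self n)]
    simp
  have rhs_eq : ∑ p ∈ antidiagonal n, coeff (R := ℂ) p.1 g * coeff (R := ℂ) p.2 (pcomp f g)
      = ∑ j ∈ range (n + 1), coeff (R := ℂ) j f * coeff (R := ℂ) n (g ^ (j + 1)) := by
    have step1 : ∀ p ∈ antidiagonal n,
        coeff (R := ℂ) p.1 g * coeff (R := ℂ) p.2 (pcomp f g) =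
        ∑ j ∈ range (n + 1), coeff (R := ℂ) p.1 g * (coeff (R := ℂ) j f * coeff (R := ℂ) p.2 (g ^ j)) := by
      intro p hp
      have hp2 : p.2 ≤ n := by
        have := Finset.HasAntidiagonal.mem_antidiagonal.mp hp
        omega
      simp only [pcomp, coeff_mk, Finset.mul_sum]
      apply Finset.sum_subset
      · intro j hj
        simp only [Finset.mem_range] at hj ⊢
        omega
      · intro j _ hj
        simp only [Finset.mem_range] at hj
        rw [aux_coeff_pow_zero hg (by omega : p.2 < j)]
        ring
    rw [Finset.sum_congr rfl step1, Finset.sum_comm]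
    refine Finset.sum_congr rfl fun j _ => ?_
    rw [pow_succ', coeff_mul, Finset.mul_sum]
    refine Finset.sum_congr rfl fun p _ => by ring
  rw [lhs_eq, rhs_eq]

lemma pcomp_X {g : PowerSeries ℂ} (hg : coeff (R := ℂ) 0 g = 0) : pcomp X g = g := by
  ext n
  simp only [pcomp, coeff_mk]
  rcases Nat.eq_zero_or_pos n with rfl | hn
  · simpa using hg.symm
  · rw [Finset.sum_eq_single 1]
    · simp
    · intro k hk hk1
      rw [coeff_X, if_neg hk1]; ring
    · intro hk
      simp only [Finset.mem_range] at hk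
      omega

/-- **The boxed identity `φ₄(x) = 2·ln(1 + x/2)`.**  Let `h` be the compositional
inverse of `F₄ = X·(1+X/2)⁻²` and let `s` be the square root of `1 − 2X` with
constant term `1`.  Then `𝔗h = h/h' = X·√(1 − 2X)`, i.e. `h = X·s·h'`.
(This expresses `𝔗Q(X·e^{−φ₄(X)}) = X·e^{(1/4)φ₄(−4X)}`, the solution of
`𝔗f = f(pX)/p` for `p⁴ = −4`.) -/
theorem statement11 (h : PowerSeries ℂ)
    (hh0 : coeff (R := ℂ) 0 h = 0) (hh1 : coeff (R := ℂ) 1 h = 1)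
    (hinv1 : pcomp F₄ h = X) (hinv2 : pcomp h F₄ = X)
    (s : PowerSeries ℂ)
    (hs0 : coeff (R := ℂ) 0 s = 1)
    (hs : s ^ 2 = 1 - 2 * X) :
    h = X * s * d⁄dX ℂ h := by
  have hC : (C (R := ℂ) (1/2) : PowerSeries ℂ) * C (R := ℂ) (1/2) = C (R := ℂ) (1/4) := by
    rw [← map_mul]; norm_num
  have hC2 : (C (R := ℂ) (1/2) : PowerSeries ℂ) + C (R := ℂ) (1/2) = 1 := by
    rw [← map_add]; norm_num
  have hC3 : (C (R := ℂ) (1/4) : PowerSeries ℂ) + C (R := ℂ) (1/4) = C (R := ℂ) (1/2) := by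
    rw [← map_add]; norm_num
  -- the algebraic equation `h = X·(1 + h/2)²`
  set u : PowerSeries ℂ := 1 + C (R := ℂ) (1 / 2) * X with hu
  have hu0 : constantCoeff (R := ℂ) u ≠ 0 := by
    rw [hu]
    simp
  have hE1 : u ^ 2 * F₄ = X := by
    rw [F₄, show u ^ 2 * (X * ((u⁻¹) ^ 2)) = X * (u * u⁻¹) ^ 2 by ring,
      PowerSeries.mul_inv_cancel _ hu0]
    ring
  have hE2 : u ^ 2 * F₄ = F₄ + X * F₄ + C (R := ℂ) (1/4) * (X * (X * F₄)) := by
    rw [hu]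
    linear_combination (X * F₄) * hC2 + (X * (X * F₄)) * hC
  have hE : h = X + h * X + C (R := ℂ) (1/4) * (h * (h * X)) := by
    have h0 : pcomp (u ^ 2 * F₄) h = h := by rw [hE1, pcomp_X hh0]
    rw [hE2, pcomp_add, pcomp_add, pcomp_X_mul hh0, pcomp_C_mul,
      pcomp_X_mul hh0, pcomp_X_mul hh0, hinv1] at h0
    linear_combination -h0
  -- derivative relation
  have hD0 := congrArg (d⁄dX ℂ) hE
  simp only [map_add, Derivation.leibniz, derivative_X, derivative_C, smul_eq_mul,
    mul_zero, zero_mul, add_zero, zero_add, mul_one, one_mul, smul_zero] at hD0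
  have hD : d⁄dX ℂ h = 1 + h + C (R := ℂ) (1/4) * h^2 + X * d⁄dX ℂ h
      + C (R := ℂ) (1/2) * (X * (h * d⁄dX ℂ h)) := by
    linear_combination hD0 + (X * h * d⁄dX ℂ h) * hC3
  -- `s` equals `t := 1 − X − X·h/2`
  set t : PowerSeries ℂ := 1 - X - C (R := ℂ) (1/2) * (X * h) with ht
  have hsq : (s - t) * (s + t) = 0 := by
    have : t ^ 2 = s ^ 2 := by
      rw [hs, ht]
      linear_combination (-2 * C (R := ℂ) (1/2) * X) * hE
        - (X^2 + C (R := ℂ) (1/4) * X^2 * h^2) * hC2 + (X^2 * h^2) * hC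
    linear_combination -this
  have hst : s = t := by
    rcases mul_eq_zero.mp hsq with h1 | h1
    · linear_combination h1
    · exfalso
      have := congrArg (coeff (R := ℂ) 0) h1
      simp [ht, hh0] at this
      rw [← coeff_zero_eq_constantCoeff_apply, hs0] at this
      norm_num at this
  rw [hst, ht]
  linear_combination hE - X * hD
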